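/- Let g : ℝ → ℝ be C¹, let u : ℝ × ℝ → ℝ be C² and m : ℝ × ℝ → ℝ be C¹, and suppose that for all (x,t), ∂_t u + ∂_x u = g(m) and ∂_t m − ∂_x m = 0. Then u satisfies the linear wave equation ∂_{tt} u(x,t) − ∂_{xx} u(x,t) = 0 for all (x,t). -/

import Mathlib

private lemma pd_snd {f : ℝ × ℝ → ℝ} {x t : ℝ} (hf : DifferentiableAt ℝ f (x, t)) :
    deriv (fun s => f (x, s)) t = fderiv ℝ f (x, t) (0, 1) := by
  have h : HasDerivAt (fun s : ℝ => ((x : ℝ), s)) (0, 1) t :=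
    (hasDerivAt_const t x).prodMk (hasDerivAt_id t)
  exact (hf.hasFDerivAt.comp_hasDerivAt t h).deriv

private lemma pd_fst {f : ℝ × ℝ → ℝ} {x t : ℝ} (hf : DifferentiableAt ℝ f (x, t)) :
    deriv (fun y => f (y, t)) x = fderiv ℝ f (x, t) (1, 0) := by
  have h : HasDerivAt (fun y : ℝ => (y, (t : ℝ))) (1, 0) x :=
    (hasDerivAt_id x).prodMk (hasDerivAt_const x t)
  exact (hf.hasFDerivAt.comp_hasDerivAt x h).deriv

private lemma fderiv_apply_const {f : ℝ × ℝ → ℝ}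
    (hdf : DifferentiableAt ℝ (fderiv ℝ f) p) (v w : ℝ × ℝ) :
    fderiv ℝ (fun q => fderiv ℝ f q v) p w = fderiv ℝ (fderiv ℝ f) p w v := by
  have := (((ContinuousLinearMap.apply ℝ ℝ v).hasFDerivAt).comp p hdf.hasFDerivAt).fderiv
  calc fderiv ℝ (fun q => fderiv ℝ f q v) p w
      = fderiv ℝ ((ContinuousLinearMap.apply ℝ ℝ v) ∘ (fderiv ℝ f)) p w := rfl
    _ = ((ContinuousLinearMap.apply ℝ ℝ v).comp (fderiv ℝ (fderiv ℝ f) p)) w := by rw [this]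
    _ = fderiv ℝ (fderiv ℝ f) p w v := rfl

/-- If `u` (C²) and `m` (C¹) solve the forward-forward MFG system with
linear Hamiltonian, `∂_t u + ∂_x u = g(m)` and `∂_t m − ∂_x m = 0` with `g` of class C¹,
then `u` satisfies the linear wave equation `∂_tt u − ∂_xx u = 0`. -/
theorem forward_forward_linear_wave_equation
    (g : ℝ → ℝ) (u m : ℝ → ℝ → ℝ)
    (hg : ContDiff ℝ 1 g)
    (hu : ContDiff ℝ 2 (fun p : ℝ × ℝ => u p.1 p.2))
    (hm : ContDiff ℝ 1 (fun p : ℝ × ℝ => m p.1 p.2))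
    (heq1 : ∀ x t : ℝ,
      deriv (fun s => u x s) t + deriv (fun y => u y t) x = g (m x t))
    (heq2 : ∀ x t : ℝ,
      deriv (fun s => m x s) t - deriv (fun y => m y t) x = 0) :
    ∀ x t : ℝ,
      deriv (fun s => deriv (fun r => u x r) s) t -
        deriv (fun y => deriv (fun z => u z t) y) x = 0 := by
  intro x t
  set f : ℝ × ℝ → ℝ := fun p => u p.1 p.2 with hfdef
  set M : ℝ × ℝ → ℝ := fun p => m p.1 p.2 with hMdef
  have hfd : Differentiable ℝ f := hu.differentiable two_ne_zero
  have hMd : Differentiable ℝ M := hm.differentiable one_ne_zero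
  have hdf : ContDiff ℝ 1 (fderiv ℝ f) := hu.fderiv_right le_rfl
  have hdfd : Differentiable ℝ (fderiv ℝ f) := hdf.differentiable one_ne_zero
  set p0 : ℝ × ℝ := (x, t) with hp0
  -- the first-order identity as functions on the plane
  have hident : ∀ p : ℝ × ℝ, fderiv ℝ f p (0, 1) + fderiv ℝ f p (1, 0) = g (M p) := by
    intro p
    have h1 := heq1 p.1 p.2
    rw [show (fun s => u p.1 s) = (fun s => f (p.1, s)) from rfl,
        show (fun y => u y p.2) = (fun y => f (y, p.2)) from rfl] at h1
    rw [pd_snd (hfd _), pd_fst (hfd _)] at h1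
    exact h1
  -- differentiate the identity at p0 in direction w
  have key : ∀ w : ℝ × ℝ,
      fderiv ℝ (fderiv ℝ f) p0 w (0, 1) + fderiv ℝ (fderiv ℝ f) p0 w (1, 0)
        = deriv g (M p0) * fderiv ℝ M p0 w := by
    intro w
    have hF1 : Differentiable ℝ (fun q => fderiv ℝ f q (0, 1)) :=
      fun q => ((ContinuousLinearMap.apply ℝ ℝ ((0:ℝ), (1:ℝ))).differentiable.differentiableAt).comp q (hdfd q)
    have hF2 : Differentiable ℝ (fun q => fderiv ℝ f q (1, 0)) :=
      fun q => ((ContinuousLinearMap.apply ℝ ℝ ((1:ℝ), (0:ℝ))).differentiable.differentiableAt).comp q (hdfd q)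
    have hgM : HasFDerivAt (fun p => g (M p))
        (deriv g (M p0) • fderiv ℝ M p0) p0 :=
      ((hg.differentiable one_ne_zero (M p0)).hasDerivAt).comp_hasFDerivAt p0 (hMd p0).hasFDerivAt
    have hsum : fderiv ℝ (fun p => fderiv ℝ f p (0, 1) + fderiv ℝ f p (1, 0)) p0 w
        = fderiv ℝ (fderiv ℝ f) p0 w (0, 1) + fderiv ℝ (fderiv ℝ f) p0 w (1, 0) := by
      rw [fderiv_fun_add (hF1 p0) (hF2 p0)]
      simp [fderiv_apply_const (hdfd p0)]
    have heqfun : (fun p : ℝ × ℝ => fderiv ℝ f p (0, 1) + fderiv ℝ f p (1, 0))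
        = fun p => g (M p) := funext hident
    rw [heqfun] at hsum
    rw [hgM.fderiv] at hsum
    simpa using hsum.symm
  -- symmetry of second derivative
  have hsymm : fderiv ℝ (fderiv ℝ f) p0 (0, 1) (1, 0)
      = fderiv ℝ (fderiv ℝ f) p0 (1, 0) (0, 1) :=
    hu.contDiffAt.isSymmSndFDerivAt (by simp) _ _
  -- the transport equation for m in fderiv form
  have hm0 : fderiv ℝ M p0 (0, 1) = fderiv ℝ M p0 (1, 0) := by
    have h2 := heq2 x t
    rw [show (fun s => m x s) = (fun s => M (x, s)) from rfl,
        show (fun y => m y t) = (fun y => M (y, t)) from rfl] at h2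
    rw [pd_snd (hMd _), pd_fst (hMd _)] at h2
    linarith
  -- convert the goal's second partials into fderiv of fderiv
  have goal1 : deriv (fun s => deriv (fun r => u x r) s) t
      = fderiv ℝ (fderiv ℝ f) p0 (0, 1) (0, 1) := by
    have hrw : (fun s => deriv (fun r => u x r) s) = fun s => fderiv ℝ f (x, s) (0, 1) := by
      funext s
      exact pd_snd (hfd _)
    have hd : DifferentiableAt ℝ (fun q : ℝ × ℝ => fderiv ℝ f q (0, 1)) (x, t) :=
      ((ContinuousLinearMap.apply ℝ ℝ ((0:ℝ),(1:ℝ))).differentiable.differentiableAt).comp _ (hdfd (x, t))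
    rw [hrw, pd_snd hd, fderiv_apply_const (hdfd _)]
  have goal2 : deriv (fun y => deriv (fun z => u z t) y) x
      = fderiv ℝ (fderiv ℝ f) p0 (1, 0) (1, 0) := by
    have hrw : (fun y => deriv (fun z => u z t) y) = fun y => fderiv ℝ f (y, t) (1, 0) := by
      funext y
      exact pd_fst (hfd _)
    have hd : DifferentiableAt ℝ (fun q : ℝ × ℝ => fderiv ℝ f q (1, 0)) (x, t) :=
      ((ContinuousLinearMap.apply ℝ ℝ ((1:ℝ),(0:ℝ))).differentiable.differentiableAt).comp _ (hdfd (x, t))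
    rw [hrw, pd_fst hd, fderiv_apply_const (hdfd _)]
  have k1 := key (0, 1)
  have k2 := key (1, 0)
  rw [goal1, goal2]
  rw [hm0] at k1
  linarith [hsymm]
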